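/- On a parallelogram with side a parallel to the x-axis, side b, and angle θ, the energy of the bilinear hourglass mode with general constant symmetric diffusion κ equals τ = (a²κ₂₂ + b²κ₁₁)/(3ab sinθ) + b((κ₂₂ − κ₁₁)cos²θ − 2κ₁₂ cosθ sinθ)/(3a sinθ). -/

import Mathlib

open MeasureTheory Real

/-- Gradient of a function on ℝ² as a pair. -/
noncomputable def grad (f : ℝ × ℝ → ℝ) (p : ℝ × ℝ) : ℝ × ℝ :=
  (fderiv ℝ f p (1, 0), fderiv ℝ f p (0, 1))

/-- The bilinear form `w ↦ z ↦ (κ w) · z` for the symmetric matrix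
`κ = [[k11,k12],[k12,k22]]`. -/
def kform (k11 k12 k22 : ℝ) (w z : ℝ × ℝ) : ℝ :=
  (k11 * w.1 + k12 * w.2) * z.1 + (k12 * w.1 + k22 * w.2) * z.2

lemma poly2_int (c0 c1 c2 : ℝ) :
    ∫ x in Set.Icc (0:ℝ) 1, (c0 + c1*x + c2*x^2) = c0 + c1/2 + c2/3 := by
  rw [MeasureTheory.integral_Icc_eq_integral_Ioc,
    ← intervalIntegral.integral_of_le (by norm_num : (0:ℝ) ≤ 1)]
  have h0 : IntervalIntegrable (fun _ : ℝ => c0) volume 0 1 := intervalIntegrable_const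
  have h1 : IntervalIntegrable (fun x : ℝ => c1 * x) volume 0 1 := by
    apply Continuous.intervalIntegrable; fun_prop
  have h2 : IntervalIntegrable (fun x : ℝ => c2 * x^2) volume 0 1 := by
    apply Continuous.intervalIntegrable; fun_prop
  rw [intervalIntegral.integral_add (h0.add h1) h2, intervalIntegral.integral_add h0 h1,
    intervalIntegral.integral_const, intervalIntegral.integral_const_mul,
    intervalIntegral.integral_const_mul, integral_id, integral_pow]
  norm_num; ring

lemma sq_int (A B C : ℝ) :
    ∫ p in Set.Icc ((0:ℝ),(0:ℝ)) (1,1),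
      (A*(1-2*p.2)^2 + B*(2*p.1-1)*(1-2*p.2) + C*(2*p.1-1)^2) = (A + C)/3 := by
  have hco : Continuous (fun p : ℝ × ℝ =>
      A*(1-2*p.2)^2 + B*(2*p.1-1)*(1-2*p.2) + C*(2*p.1-1)^2) := by fun_prop
  rw [Set.Icc_prod_eq, MeasureTheory.Measure.volume_eq_prod]
  rw [MeasureTheory.setIntegral_prod _
    (by rw [← MeasureTheory.Measure.volume_eq_prod, ← Set.Icc_prod_eq]
        exact hco.continuousOn.integrableOn_compact isCompact_Icc)]
  have inner : ∀ x : ℝ, (∫ y in Set.Icc (0:ℝ) 1,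
      (A*(1-2*y)^2 + B*(2*x-1)*(1-2*y) + C*(2*x-1)^2)) = A/3 + C*(2*x-1)^2 := by
    intro x
    have h : (∫ y in Set.Icc (0:ℝ) 1,
        (A*(1-2*y)^2 + B*(2*x-1)*(1-2*y) + C*(2*x-1)^2)) =
        ∫ y in Set.Icc (0:ℝ) 1,
          ((A + B*(2*x-1) + C*(2*x-1)^2) + (-4*A - 2*B*(2*x-1))*y + (4*A)*y^2) := by
      congr 1; funext y; ring
    rw [h, poly2_int]; ring
  simp_rw [inner]
  have h2 : (∫ x in Set.Icc (0:ℝ) 1, (A/3 + C*(2*x-1)^2)) =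
      ∫ x in Set.Icc (0:ℝ) 1, ((A/3 + C) + (-4*C)*x + (4*C)*x^2) := by
    congr 1; funext x; ring
  rw [h2, poly2_int]; ring

set_option maxHeartbeats 1000000 in
lemma ptwise (a b s c k11 k12 k22 x y : ℝ) (ha : a ≠ 0) (hb : b ≠ 0) (hs : s ≠ 0) :
    (a*b*s) * ((k11 * ((1 - 2/(b*s)*(b*s*y)) * (1/a))
        + k12 * (((1/a)*(a*x+b*c*y) + (-(c/(a*s)))*(b*s*y) - 1/2) * (-(2/(b*s)))
            + (1 - 2/(b*s)*(b*s*y)) * (-(c/(a*s))))) * ((1 - 2/(b*s)*(b*s*y)) * (1/a))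
      + (k12 * ((1 - 2/(b*s)*(b*s*y)) * (1/a))
        + k22 * (((1/a)*(a*x+b*c*y) + (-(c/(a*s)))*(b*s*y) - 1/2) * (-(2/(b*s)))
            + (1 - 2/(b*s)*(b*s*y)) * (-(c/(a*s))))) * (((1/a)*(a*x+b*c*y)
              + (-(c/(a*s)))*(b*s*y) - 1/2) * (-(2/(b*s)))
            + (1 - 2/(b*s)*(b*s*y)) * (-(c/(a*s)))))
    = ((a*b*s) * (k11/a^2 - 2*k12*c/(a^2*s) + k22*c^2/(a^2*s^2)))*(1-2*y)^2
      + ((a*b*s) * (-2*k12/(a*b*s) + 2*k22*c/(a*b*s^2)))*(2*x-1)*(1-2*y)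
      + ((a*b*s) * (k22/(b^2*s^2)))*(2*x-1)^2 := by
  field_simp
  ring

set_option maxHeartbeats 1000000

/-- on the parallelogram spanned by `u = (a,0)` and
`v = (b cosθ, b sinθ)` with `θ ∈ (0,π)`, the energy of the bilinear hourglass
mode for a general constant symmetric diffusion `κ` equals
`τ = (a²κ₂₂ + b²κ₁₁)/(3ab sinθ) + b((κ₂₂ − κ₁₁)cos²θ − 2κ₁₂ cosθ sinθ)/(3a sinθ)`. -/
theorem hourglass_energy_parallelogram_general
    (a b θ : ℝ) (ha : 0 < a) (hb : 0 < b) (hθ : θ ∈ Set.Ioo 0 π)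
    (k11 k12 k22 : ℝ)
    (F : ℝ × ℝ → ℝ × ℝ)
    (hF : ∀ w : ℝ × ℝ, F w = (a * w.1 + b * Real.cos θ * w.2, b * Real.sin θ * w.2))
    (φ : Fin 4 → ℝ × ℝ → ℝ)
    -- the Q1 reference shape functions on [0,1]², transported by F
    (hφ0 : ∀ w : ℝ × ℝ, φ 0 (F w) = (1 - w.1) * (1 - w.2))
    (hφ1 : ∀ w : ℝ × ℝ, φ 1 (F w) = w.1 * (1 - w.2))
    (hφ2 : ∀ w : ℝ × ℝ, φ 2 (F w) = w.1 * w.2)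
    (hφ3 : ∀ w : ℝ × ℝ, φ 3 (F w) = (1 - w.1) * w.2)
    (hφdiff : ∀ i : Fin 4, Differentiable ℝ (φ i))
    (Ψh : ℝ × ℝ → ℝ)
    (hΨ : ∀ p, Ψh p = (1 / 2) * (-φ 0 p + φ 1 p - φ 2 p + φ 3 p))
    (τ : ℝ)
    (hτ : τ = ∫ p in F '' Set.Icc ((0:ℝ), (0:ℝ)) (1, 1),
      kform k11 k12 k22 (grad Ψh p) (grad Ψh p)) :
    τ = (a ^ 2 * k22 + b ^ 2 * k11) / (3 * a * b * Real.sin θ) +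
      b * ((k22 - k11) * Real.cos θ ^ 2 - 2 * k12 * Real.cos θ * Real.sin θ) /
        (3 * a * Real.sin θ) := by
  obtain ⟨hθ0, hθπ⟩ := hθ
  obtain ⟨s, hs_def⟩ : ∃ s, Real.sin θ = s := ⟨_, rfl⟩
  obtain ⟨c, hc_def⟩ : ∃ c, Real.cos θ = c := ⟨_, rfl⟩
  have hs : 0 < s := hs_def ▸ Real.sin_pos_of_pos_of_lt_pi hθ0 hθπ
  have key : s^2 + c^2 = 1 := by rw [← hs_def, ← hc_def]; exact Real.sin_sq_add_cos_sq θ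
  rw [hs_def, hc_def] at hF ⊢
  have ha' : a ≠ 0 := ha.ne'
  have hb' : b ≠ 0 := hb.ne'
  have hs' : s ≠ 0 := hs.ne'
  -- Ψh equals the explicit bilinear function g
  have hΨg : Ψh = fun p : ℝ × ℝ =>
      ((1/a)*p.1 + (-(c/(a*s)))*p.2 - 1/2) * (1 - 2/(b*s)*p.2) := by
    funext p
    have hFw : F (p.1/a - c*p.2/(a*s), p.2/(b*s)) = p := by
      rw [hF]
      apply Prod.ext <;> simp <;> field_simp <;> ring
    calc Ψh p = Ψh (F (p.1/a - c*p.2/(a*s), p.2/(b*s))) := by rw [hFw]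
      _ = (1/2) * (-((1-(p.1/a - c*p.2/(a*s)))*(1-p.2/(b*s)))
            + (p.1/a - c*p.2/(a*s))*(1-p.2/(b*s))
            - (p.1/a - c*p.2/(a*s))*(p.2/(b*s))
            + (1-(p.1/a - c*p.2/(a*s)))*(p.2/(b*s))) := by
          rw [hΨ, hφ0, hφ1, hφ2, hφ3]
      _ = ((1/a)*p.1 + (-(c/(a*s)))*p.2 - 1/2) * (1 - 2/(b*s)*p.2) := by
          field_simp
          ring
  -- gradient of g
  have hgrad : ∀ p : ℝ × ℝ, grad Ψh p =
      ((1 - 2/(b*s)*p.2) * (1/a),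
        ((1/a)*p.1 + (-(c/(a*s)))*p.2 - 1/2) * (-(2/(b*s)))
          + (1 - 2/(b*s)*p.2) * (-(c/(a*s)))) := by
    intro p
    have hu : HasFDerivAt (fun p : ℝ × ℝ => (1/a)*p.1 + (-(c/(a*s)))*p.2 - 1/2)
        ((1/a) • (ContinuousLinearMap.fst ℝ ℝ ℝ)
          + (-(c/(a*s))) • (ContinuousLinearMap.snd ℝ ℝ ℝ)) p :=
      (((hasFDerivAt_fst).const_mul (1/a)).add
        ((hasFDerivAt_snd).const_mul (-(c/(a*s))))).sub_const (1/2)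
    have hv : HasFDerivAt (fun p : ℝ × ℝ => 1 - 2/(b*s)*p.2)
        ((0 : ℝ × ℝ →L[ℝ] ℝ) - (2/(b*s)) • (ContinuousLinearMap.snd ℝ ℝ ℝ)) p :=
      (hasFDerivAt_const 1 p).sub ((hasFDerivAt_snd).const_mul (2/(b*s)))
    have hD := (hu.mul hv).fderiv
    rw [hΨg]
    unfold grad
    rw [show (fun p : ℝ × ℝ => ((1/a)*p.1 + (-(c/(a*s)))*p.2 - 1/2) * (1 - 2/(b*s)*p.2)) =
      (fun p : ℝ × ℝ => (1/a)*p.1 + (-(c/(a*s)))*p.2 - 1/2) * (fun p : ℝ × ℝ => 1 - 2/(b*s)*p.2)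
      from rfl, hD]
    simp
  -- the affine (linear) map F as a continuous linear map, and its determinant
  have hFL : F = (Matrix.toLin (Module.Basis.finTwoProd ℝ) (Module.Basis.finTwoProd ℝ)
      (!![a, b*c; 0, b*s])).toContinuousLinearMap := by
    funext w
    rw [hF]
    simp [Matrix.toLin_apply, Fin.sum_univ_two, Module.Basis.finTwoProd_zero,
      Module.Basis.finTwoProd_one, Module.Basis.coe_finTwoProd_repr, Matrix.mulVec, dotProduct,
      Prod.ext_iff]
  have hdet : ((Matrix.toLin (Module.Basis.finTwoProd ℝ) (Module.Basis.finTwoProd ℝ)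
      (!![a, b*c; 0, b*s])).toContinuousLinearMap : (ℝ × ℝ) →L[ℝ] (ℝ × ℝ)).det
      = a * b * s := by
    rw [ContinuousLinearMap.det, LinearMap.coe_toContinuousLinearMap,
      LinearMap.det_toLin, Matrix.det_fin_two_of]; ring
  have hInj : Set.InjOn F (Set.Icc ((0:ℝ),(0:ℝ)) (1,1)) := by
    intro w _ w' _ h
    rw [hF, hF, Prod.mk.injEq] at h
    have h2 : w.2 = w'.2 := mul_left_cancel₀ (mul_ne_zero hb' hs') h.2
    have h1 : w.1 = w'.1 := by
      have := h.1
      rw [h2] at this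
      have : a * w.1 = a * w'.1 := by linarith
      exact mul_left_cancel₀ ha' this
    exact Prod.ext h1 h2
  rw [integral_image_eq_integral_abs_det_fderiv_smul volume measurableSet_Icc
    (fun x _ => by rw [hFL]
                   exact (LinearMap.toContinuousLinearMap _).hasFDerivAt.hasFDerivWithinAt)
    hInj] at hτ
  rw [hdet, abs_of_pos (by positivity : (0:ℝ) < a * b * s)] at hτ
  -- rewrite the integrand as a polynomial and integrate
  have hint : (∫ w in Set.Icc ((0:ℝ),(0:ℝ)) (1,1),
      (a*b*s) • kform k11 k12 k22 (grad Ψh (F w)) (grad Ψh (F w))) =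
      ∫ w in Set.Icc ((0:ℝ),(0:ℝ)) (1,1),
        (((a*b*s) * (k11/a^2 - 2*k12*c/(a^2*s) + k22*c^2/(a^2*s^2)))*(1-2*w.2)^2
          + ((a*b*s) * (-2*k12/(a*b*s) + 2*k22*c/(a*b*s^2)))*(2*w.1-1)*(1-2*w.2)
          + ((a*b*s) * (k22/(b^2*s^2)))*(2*w.1-1)^2) := by
    congr 1
    funext w
    rw [hgrad, hF]
    simp only [kform, smul_eq_mul]
    exact ptwise a b s c k11 k12 k22 w.1 w.2 ha' hb' hs'
  rw [hint, sq_int] at hτ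
  rw [hτ]
  field_simp
  linear_combination (b^2*k11) * key
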